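/- Let p = 2, n ≥ 1, m = 2^n + 1, and X = Z_2[t,t^{-1}]/(ξ_m(t)) with ξ_m = 1 + t + ··· + t^{m-1}. Set a_1 = a_2 = 2^{n-1} and a_3 = 1. Then in X: Σ_{k=0}^{m-1} t^{k·a_2} · ξ_k^{a_1 + a_3} = m · (1 + t^{a_1})^{-1} (1 + t^{a_3})^{-1} = (1+t)^{-a_1}(1+t)^{-1}, a nonzero element of X, where ξ_k = Σ_{i=0}^{k-1} t^i. -/

import Mathlib

open LaurentPolynomial Finset

instance : CharP (LaurentPolynomial (ZMod 2)) 2 :=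
  charP_of_injective_algebraMap (algebraMap (ZMod 2) _).injective 2

/-- Reindexing a geometric-type sum along multiplication by a unit mod `m`. -/
lemma sum_pow_mul_eq_zero {R : Type*} [CommRing R] (t : R) (m a : ℕ) (hm : 1 < m)
    (htm : t ^ m = 1) (ha : Nat.Coprime a m)
    (h0 : ∑ i ∈ Finset.range m, t ^ i = 0) :
    ∑ k ∈ Finset.range m, t ^ (k * a) = 0 := by
  obtain ⟨b, -, hb⟩ := Nat.exists_mul_mod_eq_one_of_coprime ha hm
  have hm0 : 0 < m := by omega
  have key : ∀ x : ℕ, (x * a % m) * b % m = x % m := by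
    intro x
    rw [Nat.mod_mul_mod, mul_assoc, Nat.mul_mod, hb, mul_one, Nat.mod_mod_of_dvd _ dvd_rfl]
  have key2 : ∀ x : ℕ, (x * b % m) * a % m = x % m := by
    intro x
    rw [Nat.mod_mul_mod, mul_assoc, mul_comm b a, Nat.mul_mod, hb, mul_one,
      Nat.mod_mod_of_dvd _ dvd_rfl]
  have : ∑ k ∈ Finset.range m, t ^ (k * a) = ∑ j ∈ Finset.range m, t ^ j := by
    refine Finset.sum_nbij' (fun k => k * a % m) (fun j => j * b % m)
      (fun k _ => Finset.mem_range.mpr (Nat.mod_lt _ hm0))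
      (fun j _ => Finset.mem_range.mpr (Nat.mod_lt _ hm0))
      (fun k hk => by
        show k * a % m * b % m = k
        rw [key k, Nat.mod_eq_of_lt (Finset.mem_range.mp hk)])
      (fun j hj => by
        show j * b % m * a % m = j
        rw [key2 j, Nat.mod_eq_of_lt (Finset.mem_range.mp hj)])
      (fun k _ => pow_eq_pow_mod _ htm)
  rw [this, h0]

/-- The cyclotomic-type element `ξ_m` is not a unit of the Laurent ring. -/
lemma xi_not_unit (m : ℕ) (hm : 2 ≤ m) :
    ¬ IsUnit (∑ i ∈ Finset.range m, (T 1 : LaurentPolynomial (ZMod 2)) ^ i) := by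
  intro hu
  set P : Polynomial (ZMod 2) := ∑ i ∈ Finset.range m, Polynomial.X ^ i with hP
  have hPL : Polynomial.toLaurent P
      = ∑ i ∈ Finset.range m, (T 1 : LaurentPolynomial (ZMod 2)) ^ i := by
    rw [hP, map_sum]
    refine Finset.sum_congr rfl fun i _ => ?_
    rw [Polynomial.toLaurent_X_pow, T_pow, mul_one]
  obtain ⟨g, hg⟩ := isUnit_iff_exists_inv.mp hu
  obtain ⟨n', q, hq⟩ := exists_T_pow g
  have hPq : P * q = Polynomial.X ^ n' := by
    apply Polynomial.toLaurent_injective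
    rw [map_mul, hPL, hq, Polynomial.toLaurent_X_pow, ← mul_assoc, hg, one_mul]
  have hcop : IsCoprime P (Polynomial.X ^ n' : Polynomial (ZMod 2)) := by
    have h1 : P = Polynomial.X * (∑ i ∈ Finset.range (m - 1), Polynomial.X ^ i) + 1 := by
      rw [hP, show m = (m - 1) + 1 by omega, Finset.sum_range_succ', Finset.mul_sum]
      simp [pow_succ, mul_comm]
    have : IsCoprime P (Polynomial.X : Polynomial (ZMod 2)) :=
      ⟨1, -(∑ i ∈ Finset.range (m - 1), Polynomial.X ^ i), by rw [h1]; ring⟩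
    exact this.pow_right
  have hPunit : IsUnit P := hcop.isUnit_of_dvd' dvd_rfl ⟨q, hPq.symm⟩
  have hdeg : P.natDegree = 0 := Polynomial.natDegree_eq_zero_of_isUnit hPunit
  have hc : P.coeff (m - 1) = 1 := by
    rw [hP, Polynomial.finset_sum_coeff, Finset.sum_eq_single (m - 1)]
    · simp
    · intro b _ hb
      simp [Polynomial.coeff_X_pow, Ne.symm hb]
    · intro h
      exact absurd (Finset.mem_range.mpr (by omega)) h
  have : P.coeff (m - 1) = 0 :=
    Polynomial.coeff_eq_zero_of_natDegree_lt (by omega)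
  rw [hc] at this
  exact one_ne_zero this

set_option maxHeartbeats 2000000 in
theorem master (n : ℕ) (hn : 0 < n)
    (ξm : LaurentPolynomial (ZMod 2))
    (hξm : ξm = ∑ i ∈ Finset.range (2 ^ n + 1), T 1 ^ i)
    (t : LaurentPolynomial (ZMod 2) ⧸ Ideal.span {ξm})
    (ht : t = Ideal.Quotient.mk (Ideal.span {ξm}) (T 1))
    (S : LaurentPolynomial (ZMod 2) ⧸ Ideal.span {ξm})
    (hS : S = ∑ k ∈ Finset.range (2 ^ n + 1),
        t ^ (k * 2 ^ (n - 1)) * (∑ i ∈ Finset.range k, t ^ i) ^ (2 ^ (n - 1) + 1)) :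
    S = ((2 ^ n + 1 : ℕ) : LaurentPolynomial (ZMod 2) ⧸ Ideal.span {ξm}) *
          Ring.inverse (1 + t ^ (2 ^ (n - 1))) * Ring.inverse (1 + t ^ 1) ∧
    S = Ring.inverse ((1 + t) ^ (2 ^ (n - 1))) * Ring.inverse (1 + t) ∧
    S ≠ 0 := by
  set m : ℕ := 2 ^ n + 1 with hm
  set a1 : ℕ := 2 ^ (n - 1) with ha1
  set τ : LaurentPolynomial (ZMod 2) := T 1 with hτ
  set π : LaurentPolynomial (ZMod 2) →+* LaurentPolynomial (ZMod 2) ⧸ Ideal.span {ξm} :=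
    (Ideal.Quotient.mk (Ideal.span {ξm}) : _) with hπ
  have hm2 : 2 ≤ m := by
    have : 0 < 2 ^ n := Nat.pow_pos (by norm_num)
    omega
  have h2n : (2 : ℕ) ^ n = a1 + a1 := by
    rw [ha1, ← two_mul, ← pow_succ']
    congr 1
    omega
  -- Frobenius in the Laurent ring
  have frob : ∀ x y : LaurentPolynomial (ZMod 2), (x + y) ^ a1 = x ^ a1 + y ^ a1 := by
    intro x y
    rw [ha1]
    exact add_pow_char_pow x y 2 (n - 1)
  -- geometric series
  have geo : ∀ (k : ℕ), (1 + τ) * ∑ i ∈ Finset.range k, τ ^ i = 1 + τ ^ k := by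
    intro k
    have h := geom_sum_mul τ k
    rw [CharTwo.sub_eq_add, CharTwo.sub_eq_add] at h
    linear_combination h
  -- key identity in the Laurent ring
  have key : (1 + τ) ^ (a1 + 1)
        * ∑ k ∈ Finset.range m, τ ^ (k * a1) * (∑ i ∈ Finset.range k, τ ^ i) ^ (a1 + 1)
      = ∑ k ∈ Finset.range m,
          (τ ^ (k * a1) + τ ^ (k * (a1 + a1)) + τ ^ (k * (a1 + 1)) + τ ^ (k * m)) := by
    rw [Finset.mul_sum]
    refine Finset.sum_congr rfl fun k _ => ?_
    have e1 : (1 + τ) ^ (a1 + 1) * (τ ^ (k * a1) * (∑ i ∈ Finset.range k, τ ^ i) ^ (a1 + 1))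
        = τ ^ (k * a1) * ((1 + τ) * ∑ i ∈ Finset.range k, τ ^ i) ^ (a1 + 1) := by
      rw [mul_pow]; ring
    rw [e1, geo k, pow_succ, frob 1 (τ ^ k), one_pow, ← pow_mul]
    have hmm : k * a1 + k * (a1 + 1) = k * m := by
      rw [hm, h2n]; ring
    have e2 : τ ^ (k * a1) * τ ^ (k * a1) = τ ^ (k * (a1 + a1)) := by
      rw [← pow_add]; congr 1; ring
    have e3 : τ ^ k * τ ^ (k * a1) = τ ^ (k * (a1 + 1)) := by
      rw [← pow_add]; congr 1; ring
    calc τ ^ (k * a1) * ((1 + τ ^ (k * a1)) * (1 + τ ^ k))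
        = τ ^ (k * a1) + τ ^ (k * a1) * τ ^ (k * a1) + τ ^ k * τ ^ (k * a1)
          + τ ^ (k * a1) * (τ ^ k * τ ^ (k * a1)) := by ring
      _ = τ ^ (k * a1) + τ ^ (k * (a1 + a1)) + τ ^ (k * (a1 + 1)) + τ ^ (k * m) := by
          rw [e2, e3, ← pow_add, hmm]
  -- facts in the quotient
  have hπξm : π ξm = 0 := Ideal.Quotient.eq_zero_iff_mem.mpr (Ideal.subset_span rfl)
  have hξ0 : ∑ i ∈ Finset.range m, t ^ i = 0 := by
    rw [ht]
    calc ∑ i ∈ Finset.range m, (π τ) ^ i = π (∑ i ∈ Finset.range m, τ ^ i) := by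
          rw [map_sum]; simp [map_pow]
      _ = 0 := by rw [← hξm, hπξm]
  have two0 : (2 : LaurentPolynomial (ZMod 2) ⧸ Ideal.span {ξm}) = 0 := by
    have h2 : (2 : LaurentPolynomial (ZMod 2)) = 0 := CharTwo.two_eq_zero
    calc (2 : LaurentPolynomial (ZMod 2) ⧸ Ideal.span {ξm}) = π 2 := (map_ofNat π 2).symm
      _ = 0 := by rw [h2, map_zero]
  have htm : t ^ m = 1 := by
    have h := geo m
    rw [← hξm] at h
    have h2 := congrArg π h
    rw [map_mul, hπξm, mul_zero, map_add, map_one, map_pow, ← ht] at h2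
    linear_combination -h2 - two0
  have hmQ : ((m : ℕ) : LaurentPolynomial (ZMod 2) ⧸ Ideal.span {ξm}) = 1 := by
    rw [hm]
    push_cast
    rw [two0, zero_pow (by omega), zero_add]
  -- coprimality
  have hoddm : Odd m := by
    rw [hm]
    exact (Nat.even_pow.mpr ⟨even_two, hn.ne'⟩).add_one
  have cop2 : Nat.Coprime 2 m := Nat.coprime_two_left.mpr hoddm
  have copA : Nat.Coprime a1 m := by rw [ha1]; exact cop2.pow_left _
  have copB : Nat.Coprime (a1 + a1) m := by rw [← h2n]; exact cop2.pow_left _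
  have copC : Nat.Coprime (a1 + 1) m := by
    have h2c : 2 * (a1 + 1) = m + 1 := by
      rw [hm, h2n]; ring
    have d1 : Nat.gcd (a1 + 1) m ∣ m := Nat.gcd_dvd_right _ _
    have d2 : Nat.gcd (a1 + 1) m ∣ 2 * (a1 + 1) := (Nat.gcd_dvd_left _ _).mul_left 2
    rw [h2c] at d2
    have d3 : Nat.gcd (a1 + 1) m ∣ (m + 1) - m := Nat.dvd_sub d2 d1
    rw [Nat.add_sub_cancel_left] at d3
    exact Nat.dvd_one.mp d3
  have hm1 : 1 < m := by omega
  have sumA : ∑ k ∈ Finset.range m, t ^ (k * a1) = 0 :=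
    sum_pow_mul_eq_zero t m a1 hm1 htm copA hξ0
  have sumB : ∑ k ∈ Finset.range m, t ^ (k * (a1 + a1)) = 0 :=
    sum_pow_mul_eq_zero t m (a1 + a1) hm1 htm copB hξ0
  have sumC : ∑ k ∈ Finset.range m, t ^ (k * (a1 + 1)) = 0 :=
    sum_pow_mul_eq_zero t m (a1 + 1) hm1 htm copC hξ0
  have sumD : ∑ k ∈ Finset.range m, t ^ (k * m) = 1 := by
    rw [Finset.sum_congr rfl (fun k _ => by rw [mul_comm, pow_mul, htm, one_pow])]
    rw [Finset.sum_const, Finset.card_range, nsmul_eq_mul, mul_one, hmQ]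
  -- transfer key to the quotient
  have keyQ : (1 + t) ^ (a1 + 1) * S
      = ∑ k ∈ Finset.range m,
          (t ^ (k * a1) + t ^ (k * (a1 + a1)) + t ^ (k * (a1 + 1)) + t ^ (k * m)) := by
    have h2 := congrArg π key
    simp only [map_mul, map_sum, map_pow, map_add, map_one] at h2
    rw [← ht] at h2
    rw [← hS] at h2
    exact h2
  have hkey : (1 + t) ^ (a1 + 1) * S = 1 := by
    rw [keyQ, Finset.sum_add_distrib, Finset.sum_add_distrib, Finset.sum_add_distrib,
      sumA, sumB, sumC, sumD]
    simp
  have hu1 : IsUnit (1 + t) :=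
    IsUnit.of_mul_eq_one ((1 + t) ^ a1 * S)
      (by rw [← mul_assoc, ← pow_succ']; exact hkey)
  have hu : IsUnit ((1 + t) ^ (a1 + 1)) := hu1.pow _
  have hS_inv : S = Ring.inverse ((1 + t) ^ (a1 + 1)) := by
    calc S = Ring.inverse ((1 + t) ^ (a1 + 1)) * ((1 + t) ^ (a1 + 1) * S) :=
          (Ring.inverse_mul_cancel_left _ _ hu).symm
      _ = Ring.inverse ((1 + t) ^ (a1 + 1)) := by rw [hkey, mul_one]
  have goal2 : S = Ring.inverse ((1 + t) ^ a1) * Ring.inverse (1 + t) := by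
    rw [hS_inv, pow_succ, Ring.mul_inverse_rev, mul_comm]
  have frobQ : (1 + t) ^ a1 = 1 + t ^ a1 := by
    have hf := frob 1 τ
    rw [one_pow] at hf
    have h2 := congrArg π hf
    simp only [map_pow, map_add, map_one] at h2
    rw [← ht] at h2
    exact h2
  refine ⟨?_, goal2, ?_⟩
  · rw [pow_one, ← frobQ, hmQ, one_mul]
    exact goal2
  · intro h0
    rw [h0, mul_zero] at hkey
    have h1 : (1 : LaurentPolynomial (ZMod 2) ⧸ Ideal.span {ξm}) = 0 := hkey.symm
    have hmem : (1 : LaurentPolynomial (ZMod 2)) ∈ Ideal.span {ξm} := by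
      apply Ideal.Quotient.eq_zero_iff_mem.mp
      rw [map_one]
      exact h1
    have htop : Ideal.span ({ξm} : Set (LaurentPolynomial (ZMod 2))) = ⊤ :=
      (Ideal.eq_top_iff_one _).mpr hmem
    have hunit : IsUnit ξm := Ideal.span_singleton_eq_top.mp htop
    rw [hξm] at hunit
    exact xi_not_unit m hm2 hunit

theorem stmt14 (n : ℕ) (hn : 0 < n) :
    let m := 2 ^ n + 1
    let a1 := 2 ^ (n - 1)
    let a2 := 2 ^ (n - 1)
    let a3 := 1
    let ξm : LaurentPolynomial (ZMod 2) := ∑ i ∈ Finset.range m, T 1 ^ i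
    let t : LaurentPolynomial (ZMod 2) ⧸ Ideal.span {ξm} :=
      Ideal.Quotient.mk (Ideal.span {ξm}) (T 1)
    let ξ : ℕ → LaurentPolynomial (ZMod 2) ⧸ Ideal.span {ξm} :=
      fun k => ∑ i ∈ Finset.range k, t ^ i
    let S := ∑ k ∈ Finset.range m, t ^ (k * a2) * (ξ k) ^ (a1 + a3)
    S = (m : LaurentPolynomial (ZMod 2) ⧸ Ideal.span {ξm}) *
          Ring.inverse (1 + t ^ a1) * Ring.inverse (1 + t ^ a3) ∧
    S = Ring.inverse ((1 + t) ^ a1) * Ring.inverse (1 + t) ∧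
    S ≠ 0 := by
  intro m a1 a2 a3 ξm t ξ S
  exact master n hn ξm rfl t rfl S rfl
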